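/- Under the standing assumptions (A1)–(A4) and (h1)–(h3), define for t ∈ [0, t⋆) the set K(t) := {x ∈ Ω : ‖x − x₀‖ ≤ t and ‖(L_f(x, 0)⁻¹ ∩ B(x₁, r_{x₁})) − x‖ ≤ −ψ(t)/ψ′(t)}, K := ⋃_{t ∈ [0, t⋆)} K(t), the Newton iteration map N_{f+F}(x) := L_f(x, 0)⁻¹ ∩ B(x₁, r_{x₁}) (the unique element of that set) for x ∈ B(x₀, t⋆), and n_ψ(t) := t − ψ(t)/ψ′(t). Then for each t ∈ [0, t⋆): K(t) ⊆ B(x₀, t⋆) and N_{f+F}(K(t)) ⊆ K(n_ψ(t)). As a consequence, K ⊆ B(x₀, t⋆) and N_{f+F}(K) ⊆ K. -/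

import Mathlib

open Metric Set Filter

set_option maxHeartbeats 1600000 in
/-- Proposition `pr:syn`: the sets `K(t)` are invariant under the Newton iteration mapping `N_{f+F}(x) = s x 0`. -/
theorem stmt9
    {X Y : Type*} [NormedAddCommGroup X] [NormedSpace ℝ X] [CompleteSpace X]
    [NormedAddCommGroup Y] [NormedSpace ℝ Y] [CompleteSpace Y]
    (Ω : Set X) (hΩ : IsOpen Ω)
    (f : X → Y) (f' : X → X →L[ℝ] Y) (F : X → Set Y)
    (hfd : ∀ x ∈ Ω, HasFDerivAt f (f' x) x)
    (hf'c : ContinuousOn f' Ω)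
    (hFg : IsClosed {p : X × Y | p.2 ∈ F p.1})
    (x₀ : X) (hx₀ : x₀ ∈ Ω) (R : ℝ) (hR : 0 < R)
    (κ : ℝ) (hκ : κ = sSup {t : ℝ | t ∈ Ico (0:ℝ) R ∧ ball x₀ t ⊆ Ω})
    -- (A1): strong-regularity constants and the single-valued selection `s`
    (x₁ : X) (hx₁ : x₁ ∈ Ω)
    (hx₁sol : -(f x₀ + f' x₀ (x₁ - x₀)) ∈ F x₁)
    (lam rx1 r0 rx0 : ℝ)
    (hlam : 0 < lam) (hrx1 : 0 < rx1) (hr0 : 0 < r0) (hrx0 : 0 < rx0)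
    (hball : ball x₀ rx0 ⊆ Ω)
    (s : X → Y → X)
    (hA1 : ∀ x ∈ ball x₀ rx0,
      lam * ‖f' x - f' x₀‖ < 1 ∧
      (∀ z ∈ ball (0:Y) r0,
        ({y : X | z - (f x + f' x (y - x)) ∈ F y} ∩ ball x₁ rx1) = {s x z}) ∧
      (∀ u ∈ ball (0:Y) r0, ∀ v ∈ ball (0:Y) r0,
        ‖s x u - s x v‖ ≤ lam / (1 - lam * ‖f' x - f' x₀‖) * ‖u - v‖))
    -- (A2): the majorant function ψ and the majorant condition
    (ψ ψ' ψ'' : ℝ → ℝ)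
    (hψ1 : ∀ t ∈ Ico (0:ℝ) R, HasDerivAt ψ (ψ' t) t)
    (hψ2 : ∀ t ∈ Ico (0:ℝ) R, HasDerivAt ψ' (ψ'' t) t)
    (hψ2c : ContinuousOn ψ'' (Ico (0:ℝ) R))
    (hmaj : ∀ x ∈ ball x₀ κ, ∀ y ∈ ball x₀ κ, ‖y - x‖ + ‖x - x₀‖ < R →
      lam * ‖f' y - f' x‖ ≤ ψ' (‖y - x‖ + ‖x - x₀‖) - ψ' ‖x - x₀‖)
    -- (A3)
    (hA3 : ‖x₁ - x₀‖ ≤ ψ 0)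
    -- (h1)-(h3)
    (h1 : 0 < ψ 0) (h1' : ψ' 0 = -1)
    (h2a : ConvexOn ℝ (Ico (0:ℝ) R) ψ')
    (h2b : StrictMonoOn ψ' (Ico (0:ℝ) R))
    (tstar : ℝ)
    (h3 : IsLeast {t ∈ Ico (0:ℝ) R | ψ t = 0} tstar)
    -- (A4)
    (hA4a : tstar ≤ min κ rx0)
    (hA4b : ψ'' tstar / (2 * lam) * ψ 0 ^ 2 < r0)
    (K : ℝ → Set X)
    (hK : ∀ t : ℝ, K t = {x : X | x ∈ Ω ∧ ‖x - x₀‖ ≤ t ∧ ‖s x 0 - x‖ ≤ -(ψ t / ψ' t)})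
    (nψ : ℝ → ℝ) (hnψ : ∀ t : ℝ, nψ t = t - ψ t / ψ' t)
    :
    (∀ t ∈ Ico (0:ℝ) tstar,
      K t ⊆ ball x₀ tstar ∧ (∀ x ∈ K t, s x 0 ∈ K (nψ t))) ∧
    (⋃ t ∈ Ico (0:ℝ) tstar, K t) ⊆ ball x₀ tstar ∧
    (∀ x ∈ ⋃ t ∈ Ico (0:ℝ) tstar, K t, s x 0 ∈ ⋃ t ∈ Ico (0:ℝ) tstar, K t) := by

  -- destructure the least-zero hypothesis
  obtain ⟨⟨⟨hts0, htsR⟩, hψts⟩, htsmin⟩ := h3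
  have htspos : 0 < tstar := by
    rcases hts0.lt_or_eq with h | h
    · exact h
    · exfalso; rw [← h] at hψts; exact h1.ne' hψts
  have hκts : tstar ≤ κ := le_trans hA4a (min_le_left _ _)
  have hrx0ts : tstar ≤ rx0 := le_trans hA4a (min_le_right _ _)
  have hmemIcoR : ∀ u : ℝ, 0 ≤ u → u ≤ tstar → u ∈ Ico (0:ℝ) R :=
    fun u hu1 hu2 => ⟨hu1, lt_of_le_of_lt hu2 htsR⟩
  have hψcont : ContinuousOn ψ (Ico (0:ℝ) R) :=
    fun u hu => ((hψ1 u hu).continuousAt).continuousWithinAt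
  have hψ'cont : ContinuousOn ψ' (Ico (0:ℝ) R) :=
    fun u hu => ((hψ2 u hu).continuousAt).continuousWithinAt
  -- ψ is positive strictly before tstar
  have hψpos : ∀ u : ℝ, 0 ≤ u → u < tstar → 0 < ψ u := by
    intro u hu0 huts
    by_contra hle
    push_neg at hle
    have hIccsub : Icc (0:ℝ) u ⊆ Ico (0:ℝ) R := fun v hv =>
      ⟨hv.1, lt_of_le_of_lt (le_trans hv.2 (le_of_lt huts)) htsR⟩
    have h0 : (0:ℝ) ∈ Icc (ψ u) (ψ 0) := ⟨hle, h1.le⟩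
    have := intermediate_value_Icc' hu0 (hψcont.mono hIccsub) h0
    obtain ⟨c, hc, hψc⟩ := this
    have : tstar ≤ c := htsmin ⟨⟨hc.1, lt_of_le_of_lt (le_trans hc.2 huts.le) htsR⟩, hψc⟩
    exact absurd (lt_of_le_of_lt hc.2 huts) (not_lt.2 this)
  -- ψ' is negative strictly before tstar
  have hψ'neg : ∀ u : ℝ, 0 ≤ u → u < tstar → ψ' u < 0 := by
    intro u hu0 huts
    by_contra hle
    push_neg at hle
    have hsub : Icc u tstar ⊆ Ico (0:ℝ) R := fun v hv =>
      ⟨le_trans hu0 hv.1, lt_of_le_of_lt hv.2 htsR⟩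
    have hmono : MonotoneOn ψ (Icc u tstar) := by
      apply monotoneOn_of_deriv_nonneg (convex_Icc u tstar) (hψcont.mono hsub)
      · intro v hv
        rw [interior_Icc] at hv
        exact ((hψ1 v (hsub (Ioo_subset_Icc_self hv))).differentiableAt).differentiableWithinAt
      · intro v hv
        rw [interior_Icc] at hv
        have hvm : v ∈ Ico (0:ℝ) R := hsub (Ioo_subset_Icc_self hv)
        rw [(hψ1 v hvm).deriv]
        have := h2b (hmemIcoR u hu0 huts.le) hvm hv.1
        linarith
    have := hmono ⟨le_refl u, huts.le⟩ ⟨huts.le, le_refl tstar⟩ huts.le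
    rw [hψts] at this
    exact absurd (hψpos u hu0 huts) (not_lt.2 this)
  -- convexity of ψ
  have hderiv_eq : ∀ v ∈ Ioo (0:ℝ) R, deriv ψ v = ψ' v := by
    intro v hv; exact (hψ1 v (Ioo_subset_Ico_self hv)).deriv
  have hconvψ : ConvexOn ℝ (Ico (0:ℝ) R) ψ := by
    apply MonotoneOn.convexOn_of_deriv (convex_Ico 0 R) hψcont
    · intro v hv
      rw [interior_Ico] at hv
      exact ((hψ1 v (Ioo_subset_Ico_self hv)).differentiableAt).differentiableWithinAt
    · intro v hv w hw hvw
      rw [interior_Ico] at hv hw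
      rw [hderiv_eq v hv, hderiv_eq w hw]
      exact h2b.monotoneOn (Ioo_subset_Ico_self hv) (Ioo_subset_Ico_self hw) hvw
  have hstrictψ : StrictConvexOn ℝ (Ico (0:ℝ) R) ψ := by
    apply StrictMonoOn.strictConvexOn_of_deriv (convex_Ico 0 R) hψcont
    intro v hv w hw hvw
    rw [interior_Ico] at hv hw
    rw [hderiv_eq v hv, hderiv_eq w hw]
    exact h2b (Ioo_subset_Ico_self hv) (Ioo_subset_Ico_self hw) hvw
  -- ψ' tstar ≤ 0
  have hψ'ts : ψ' tstar ≤ 0 := by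
    have hc : ContinuousAt ψ' tstar := (hψ2 tstar (hmemIcoR tstar hts0 le_rfl)).continuousAt
    have htd : Tendsto ψ' (nhdsWithin tstar (Iio tstar)) (nhds (ψ' tstar)) :=
      hc.continuousWithinAt.tendsto
    refine le_of_tendsto htd ?_
    filter_upwards [Ioo_mem_nhdsLT_of_mem (show tstar ∈ Ioc (0:ℝ) tstar from ⟨htspos, le_rfl⟩)]
      with u hu
    exact (hψ'neg u hu.1.le hu.2).le
  -- the ratio bound : ψ u + ψ 0 * ψ' u ≤ 0 on [0, tstar]
  have hratio0 : ∀ u : ℝ, 0 ≤ u → u ≤ tstar → ψ u + ψ 0 * ψ' u ≤ 0 := by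
    intro u hu0 huts
    have hconvh : ConvexOn ℝ (Ico (0:ℝ) R) (fun v => ψ v + ψ 0 * ψ' v) := by
      have := h2a.smul h1.le
      exact hconvψ.add (by simpa [smul_eq_mul] using this)
    have hmem0 : (0:ℝ) ∈ Ico (0:ℝ) R := ⟨le_rfl, hR⟩
    have hmemts : tstar ∈ Ico (0:ℝ) R := hmemIcoR tstar hts0 le_rfl
    have ha : 0 ≤ 1 - u / tstar := by
      rw [sub_nonneg, div_le_one htspos]; exact huts
    have hb : 0 ≤ u / tstar := div_nonneg hu0 htspos.le
    have hab : (1 - u / tstar) + u / tstar = 1 := by ring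
    have := hconvh.2 hmem0 hmemts ha hb hab
    simp only [smul_eq_mul, mul_zero, zero_add] at this
    have hu_eq : u / tstar * tstar = u := div_mul_cancel₀ u htspos.ne'
    rw [hu_eq] at this
    have h0val : ψ 0 + ψ 0 * ψ' 0 = 0 := by rw [h1']; ring
    have htsval : ψ tstar + ψ 0 * ψ' tstar ≤ 0 := by
      rw [hψts]; have := mul_nonpos_of_nonneg_of_nonpos h1.le hψ'ts; linarith
    calc ψ u + ψ 0 * ψ' u ≤ (1 - u/tstar) * (ψ 0 + ψ 0 * ψ' 0) + u/tstar * (ψ tstar + ψ 0 * ψ' tstar) := this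
      _ ≤ 0 := by
          rw [h0val]
          have := mul_nonpos_of_nonneg_of_nonpos hb htsval
          linarith
  -- monotonicity-type bounds for ψ''
  have hψ''mono : ∀ v : ℝ, 0 ≤ v → v ≤ tstar → ψ'' v ≤ ψ'' tstar := by
    intro v hv0 hvts
    rcases hvts.lt_or_eq with hlt | heq
    · have hmv : v ∈ Ico (0:ℝ) R := hmemIcoR v hv0 hvts
      have hmts : tstar ∈ Ico (0:ℝ) R := hmemIcoR tstar hts0 le_rfl
      have h1a := h2a.le_slope_of_hasDerivAt hmv hmts hlt (hψ2 v hmv)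
      have h1b := h2a.slope_le_of_hasDerivAt hmv hmts hlt (hψ2 tstar hmts)
      exact le_trans h1a h1b
    · rw [heq]
  have hψ''ts : 0 ≤ ψ'' tstar := by
    have hm0 : (0:ℝ) ∈ Ico (0:ℝ) R := ⟨le_rfl, hR⟩
    have hmts : tstar ∈ Ico (0:ℝ) R := hmemIcoR tstar hts0 le_rfl
    have hs := h2a.slope_le_of_hasDerivAt hm0 hmts htspos (hψ2 tstar hmts)
    rw [slope_def_field] at hs
    have hnum : 0 ≤ ψ' tstar - ψ' 0 := by
      have := h2b hm0 hmts htspos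
      linarith
    have : 0 ≤ (ψ' tstar - ψ' 0) / (tstar - 0) := div_nonneg hnum (by linarith)
    linarith
  -- geometric facts about the Newton step on the majorant
  have hptpos : ∀ t : ℝ, 0 ≤ t → t < tstar → 0 < -(ψ t / ψ' t) := by
    intro t ht0 hts
    have h1t := hψpos t ht0 hts
    have h2t := hψ'neg t ht0 hts
    have : ψ t / ψ' t < 0 := div_neg_of_pos_of_neg h1t h2t
    linarith
  have hnlt : ∀ t : ℝ, 0 ≤ t → t < tstar → nψ t < tstar := by
    intro t ht0 hts
    have hmt : t ∈ Ico (0:ℝ) R := hmemIcoR t ht0 hts.le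
    have hmts : tstar ∈ Ico (0:ℝ) R := hmemIcoR tstar hts0 le_rfl
    have hslope := hstrictψ.lt_slope_of_hasDerivAt hmt hmts hts (hψ1 t hmt)
    rw [slope_def_field, hψts] at hslope
    have hc := hψ'neg t ht0 hts
    have hp := hψpos t ht0 hts
    have hT : 0 < tstar - t := by linarith
    rw [lt_div_iff₀ hT] at hslope
    have hq : ψ t / ψ' t * ψ' t = ψ t := div_mul_cancel₀ _ hc.ne
    rw [hnψ]
    nlinarith [hslope, hq]
  have hnge : ∀ t : ℝ, 0 ≤ t → t < tstar → t ≤ nψ t := by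
    intro t ht0 hts
    rw [hnψ]
    have := hptpos t ht0 hts
    linarith
  have hrat : ∀ t : ℝ, 0 ≤ t → t < tstar → -(ψ t / ψ' t) ≤ ψ 0 := by
    intro t ht0 hts
    have hc := hψ'neg t ht0 hts
    have := hratio0 t ht0 hts.le
    rw [neg_div', div_le_iff_of_neg hc]
    linarith
  -- The main step
  have hmain : ∀ t ∈ Ico (0:ℝ) tstar, ∀ x ∈ K t, s x 0 ∈ K (nψ t) := by
    intro t ht x hx
    obtain ⟨ht0, hts⟩ := ht
    rw [hK t] at hx
    obtain ⟨hxΩ, hxb, hxa⟩ := hx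
    set xp := s x 0 with hxpdef
    set b := ‖x - x₀‖ with hbdef
    set d := xp - x with hddef
    set a := ‖d‖ with hadef
    have hb0 : 0 ≤ b := norm_nonneg _
    have ha0 : 0 ≤ a := norm_nonneg _
    have hψ't := hψ'neg t ht0 hts
    have hψt := hψpos t ht0 hts
    have hptp := hptpos t ht0 hts
    have hnt_lt := hnlt t ht0 hts
    have hnt_ge := hnge t ht0 hts
    have hnt0 : 0 ≤ nψ t := le_trans ht0 hnt_ge
    have hnub : nψ t = t + -(ψ t / ψ' t) := by rw [hnψ]; ring
    have habnt : b + a ≤ nψ t := by rw [hnub]; exact add_le_add hxb hxa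
    have hxrx0 : x ∈ ball x₀ rx0 := by
      rw [mem_ball, dist_eq_norm]
      exact lt_of_le_of_lt hxb (lt_of_lt_of_le hts hrx0ts)
    have hxκ : x ∈ ball x₀ κ := by
      rw [mem_ball, dist_eq_norm]
      exact lt_of_le_of_lt hxb (lt_of_lt_of_le hts hκts)
    obtain ⟨hx_reg, hx_sing, hx_lip⟩ := hA1 x hxrx0
    have h0ball : (0:Y) ∈ ball (0:Y) r0 := mem_ball_self hr0
    have hsing0 := hx_sing 0 h0ball
    have hxp_mem : xp ∈ {y : X | (0:Y) - (f x + f' x (y - x)) ∈ F y} ∩ ball x₁ rx1 := by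
      rw [hsing0]; exact rfl
    obtain ⟨hxpF, hxp1⟩ := hxp_mem
    have hxpd : ‖xp - x₀‖ ≤ nψ t := by
      have h := norm_add_le (xp - x) (x - x₀)
      rw [sub_add_sub_cancel] at h
      refine le_trans h ?_
      rw [hnub]
      have : ‖xp - x‖ = a := by rw [hadef, hddef]
      rw [this]
      linarith [hxa, hxb]
    have hxpts : ‖xp - x₀‖ < tstar := lt_of_le_of_lt hxpd hnt_lt
    have hxprx0 : xp ∈ ball x₀ rx0 := by
      rw [mem_ball, dist_eq_norm]; exact lt_of_lt_of_le hxpts hrx0ts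
    have hxpΩ : xp ∈ Ω := hball hxprx0
    have hxpκ : xp ∈ ball x₀ κ := by
      rw [mem_ball, dist_eq_norm]; exact lt_of_lt_of_le hxpts hκts
    -- segment facts
    have hseg : ∀ τ : ℝ, 0 ≤ τ → τ ≤ 1 → ‖x + τ • d - x₀‖ ≤ b + τ * a := by
      intro τ hτ0 hτ1
      have h : x + τ • d - x₀ = (x - x₀) + τ • d := by abel
      rw [h]
      refine le_trans (norm_add_le _ _) ?_
      rw [norm_smul, Real.norm_eq_abs, abs_of_nonneg hτ0]
    have hsegnt : ∀ τ : ℝ, 0 ≤ τ → τ ≤ 1 → b + τ * a ≤ nψ t := by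
      intro τ hτ0 hτ1
      have : τ * a ≤ a := by nlinarith
      linarith
    have hsegrx0 : ∀ τ : ℝ, 0 ≤ τ → τ ≤ 1 → x + τ • d ∈ ball x₀ rx0 := by
      intro τ hτ0 hτ1
      rw [mem_ball, dist_eq_norm]
      exact lt_of_le_of_lt (le_trans (hseg τ hτ0 hτ1) (hsegnt τ hτ0 hτ1))
        (lt_of_lt_of_le hnt_lt hrx0ts)
    have hsegκ : ∀ τ : ℝ, 0 ≤ τ → τ ≤ 1 → x + τ • d ∈ ball x₀ κ := by
      intro τ hτ0 hτ1
      rw [mem_ball, dist_eq_norm]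
      exact lt_of_le_of_lt (le_trans (hseg τ hτ0 hτ1) (hsegnt τ hτ0 hτ1))
        (lt_of_lt_of_le hnt_lt hκts)
    have hsegΩ : ∀ τ : ℝ, 0 ≤ τ → τ ≤ 1 → x + τ • d ∈ Ω :=
      fun τ h h' => hball (hsegrx0 τ h h')
    set z := f xp - f x - f' x d with hzdef
    have hbmem : ∀ τ : ℝ, 0 ≤ τ → τ ≤ 1 → b + τ * a ∈ Ico (0:ℝ) R := by
      intro τ hτ0 hτ1
      refine ⟨by positivity, ?_⟩
      exact lt_of_le_of_lt (hsegnt τ hτ0 hτ1) (lt_trans hnt_lt htsR)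
    -- E1 : the linearization-error bound ("fencing")
    have hE1 : lam * ‖z‖ ≤ ψ (b + a) - ψ b - a * ψ' b := by
      set g := fun τ : ℝ => f (x + τ • d) - f x - τ • (f' x d) with hgdef
      set g' := fun τ : ℝ => f' (x + τ • d) d - f' x d with hg'def
      set B := fun τ : ℝ => (1/lam) * (ψ (b + τ * a) - ψ b - τ * (a * ψ' b)) with hBdef
      set B' := fun τ : ℝ => (1/lam) * (a * ψ' (b + τ * a) - a * ψ' b) with hB'def
      have hgd : ∀ τ ∈ Icc (0:ℝ) 1, HasDerivAt g (g' τ) τ := by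
        intro τ hτ
        have hγ : HasDerivAt (fun τ : ℝ => x + τ • d) d τ := by
          simpa using ((hasDerivAt_id τ).smul_const d).const_add x
        have hfγ : HasDerivAt (fun τ : ℝ => f (x + τ • d)) (f' (x + τ • d) d) τ := by
          have hm := hsegΩ τ hτ.1 hτ.2
          exact (hfd _ hm).comp_hasDerivAt τ hγ
        have hlin : HasDerivAt (fun τ : ℝ => τ • (f' x d)) (f' x d) τ := by
          simpa using (hasDerivAt_id τ).smul_const (f' x d)
        exact (hfγ.sub_const (f x)).sub hlin
      have hBd : ∀ τ ∈ Icc (0:ℝ) 1, HasDerivAt B (B' τ) τ := by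
        intro τ hτ
        have haff : HasDerivAt (fun τ : ℝ => b + τ * a) a τ := by
          simpa using ((hasDerivAt_id τ).mul_const a).const_add b
        have hcomp : HasDerivAt (fun τ : ℝ => ψ (b + τ * a)) (ψ' (b + τ * a) * a) τ :=
          (hψ1 _ (hbmem τ hτ.1 hτ.2)).comp τ haff
        have hres := ((hcomp.sub_const (ψ b)).sub
          ((hasDerivAt_id τ).mul_const (a * ψ' b))).const_mul (1/lam)
        have heq : B' τ = (1/lam) * (ψ' (b + τ * a) * a - 1 * (a * ψ' b)) := by
          rw [hB'def]; ring
        rw [heq]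
        exact hres
      have hgc : ContinuousOn g (Icc (0:ℝ) 1) :=
        fun τ hτ => (hgd τ hτ).continuousAt.continuousWithinAt
      have hBc : ContinuousOn B (Icc (0:ℝ) 1) :=
        fun τ hτ => (hBd τ hτ).continuousAt.continuousWithinAt
      have hbound : ∀ τ ∈ Ico (0:ℝ) 1, ‖g' τ‖ ≤ B' τ := by
        intro τ hτ
        have hτ0 := hτ.1
        have hτ1 := hτ.2.le
        have hyκ := hsegκ τ hτ0 hτ1
        have hnorm : ‖x + τ • d - x‖ = τ * a := by
          have h : x + τ • d - x = τ • d := by abel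
          rw [h, norm_smul, Real.norm_eq_abs, abs_of_nonneg hτ0]
        have hcond : ‖x + τ • d - x‖ + ‖x - x₀‖ < R := by
          rw [hnorm]
          have h := hsegnt τ hτ0 hτ1
          have : (τ * a + b) ≤ nψ t := by linarith
          exact lt_of_le_of_lt this (lt_trans hnt_lt htsR)
        have hmaj' := hmaj x hxκ (x + τ • d) hyκ hcond
        rw [hnorm] at hmaj'
        have hnorm2 : ‖g' τ‖ ≤ ‖f' (x + τ • d) - f' x‖ * a := by
          have h : g' τ = (f' (x + τ • d) - f' x) d := by
            simp only [hg'def]; simp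
          rw [h]
          exact ContinuousLinearMap.le_opNorm _ _
        have hcomm : τ * a + b = b + τ * a := by ring
        rw [hcomm] at hmaj'
        simp only [hB'def]
        have hNnn : (0:ℝ) ≤ ‖f' (x + τ • d) - f' x‖ := norm_nonneg _
        have hmul := mul_le_mul_of_nonneg_right hmaj' ha0
        refine le_trans hnorm2 ?_
        rw [one_div, inv_mul_eq_div, le_div_iff₀ hlam]
        nlinarith [hmul]
      have hg1 := image_norm_le_of_norm_deriv_right_le_deriv_boundary' hgc
        (fun τ hτ => (hgd τ (Ico_subset_Icc_self hτ)).hasDerivWithinAt)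
        (show ‖g 0‖ ≤ B 0 by simp [hgdef, hBdef])
        hBc (fun τ hτ => (hBd τ (Ico_subset_Icc_self hτ)).hasDerivWithinAt)
        hbound (right_mem_Icc.2 zero_le_one)
      have hgval : g 1 = z := by
        rw [hgdef, hzdef]
        simp only [one_smul, hddef]
        rw [add_sub_cancel]
      have hBval : B 1 = (1/lam) * (ψ (b + a) - ψ b - a * ψ' b) := by
        rw [hBdef]; norm_num
      rw [hgval, hBval] at hg1
      calc lam * ‖z‖ ≤ lam * ((1/lam) * (ψ (b + a) - ψ b - a * ψ' b)) :=
            mul_le_mul_of_nonneg_left hg1 hlam.le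
        _ = ψ (b + a) - ψ b - a * ψ' b := by field_simp
    -- E2 : comparison in the base point
    have hE2 : ψ (b + a) - ψ b - a * ψ' b ≤ ψ (t + a) - ψ t - a * ψ' t := by
      have hta : t + a ≤ nψ t := by rw [hnub]; linarith [hxa]
      have hmemu : ∀ u : ℝ, 0 ≤ u → u ≤ t → (u ∈ Ico (0:ℝ) R ∧ u + a ∈ Ico (0:ℝ) R) := by
        intro u h1u h2u
        refine ⟨⟨h1u, by linarith [htsR]⟩, ⟨by positivity, ?_⟩⟩
        have : u + a ≤ t + a := by linarith
        linarith [hnt_lt, htsR]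
      have hφd : ∀ u : ℝ, 0 ≤ u → u ≤ t →
          HasDerivAt (fun u : ℝ => ψ (u + a) - ψ u - a * ψ' u)
            (ψ' (u + a) - ψ' u - a * ψ'' u) u := by
        intro u h1u h2u
        obtain ⟨hmu, hmua⟩ := hmemu u h1u h2u
        have c1 : HasDerivAt (fun u : ℝ => ψ (u + a)) (ψ' (u + a)) u := by
          have haff : HasDerivAt (fun u : ℝ => u + a) 1 u := (hasDerivAt_id u).add_const a
          have h := (hψ1 _ hmua).comp u haff; rw [mul_one] at h; exact h
        exact (c1.sub (hψ1 u hmu)).sub (HasDerivAt.const_mul a (hψ2 u hmu))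
      have hm : MonotoneOn (fun u : ℝ => ψ (u + a) - ψ u - a * ψ' u) (Icc b t) := by
        apply monotoneOn_of_deriv_nonneg (convex_Icc b t)
        · intro u hu
          exact (hφd u (le_trans hb0 hu.1) hu.2).continuousAt.continuousWithinAt
        · intro u hu
          rw [interior_Icc] at hu
          exact (hφd u (le_trans hb0 hu.1.le) hu.2.le).differentiableAt.differentiableWithinAt
        · intro u hu
          rw [interior_Icc] at hu
          have h1u : 0 ≤ u := le_trans hb0 hu.1.le
          have h2u : u ≤ t := hu.2.le
          rw [(hφd u h1u h2u).deriv]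
          obtain ⟨hmu, hmua⟩ := hmemu u h1u h2u
          rcases ha0.lt_or_eq with hapos | ha00
          · have hsl := h2a.le_slope_of_hasDerivAt hmu hmua (by linarith) (hψ2 u hmu)
            rw [slope_def_field] at hsl
            have he : u + a - u = a := by ring
            rw [he, le_div_iff₀ hapos] at hsl
            nlinarith [hsl]
          · rw [← ha00]; simp
      exact hm ⟨le_refl b, hxb⟩ ⟨hxb, le_refl t⟩ hxb
    -- E3 : comparison in the step length
    have hE3 : ψ (t + a) - ψ t - a * ψ' t ≤ ψ (nψ t) := by
      have hta : t + a ≤ nψ t := by rw [hnub]; linarith [hxa]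
      have hmemv : ∀ v : ℝ, t ≤ v → v ≤ nψ t → v ∈ Ico (0:ℝ) R :=
        fun v h1v h2v => ⟨le_trans ht0 h1v, by linarith [hnt_lt, htsR]⟩
      have hηd : ∀ v : ℝ, t ≤ v → v ≤ nψ t →
          HasDerivAt (fun v : ℝ => ψ v - ψ' t * v) (ψ' v - ψ' t) v := by
        intro v h1v h2v
        have := (hψ1 v (hmemv v h1v h2v)).sub (HasDerivAt.const_mul (ψ' t) (hasDerivAt_id v))
        exact (by simpa using this : HasDerivAt (ψ - fun y => ψ' t * y) (ψ' v - ψ' t) v)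
      have hm : MonotoneOn (fun v : ℝ => ψ v - ψ' t * v) (Icc t (nψ t)) := by
        apply monotoneOn_of_deriv_nonneg (convex_Icc _ _)
        · intro v hv; exact (hηd v hv.1 hv.2).continuousAt.continuousWithinAt
        · intro v hv; rw [interior_Icc] at hv
          exact (hηd v hv.1.le hv.2.le).differentiableAt.differentiableWithinAt
        · intro v hv; rw [interior_Icc] at hv
          rw [(hηd v hv.1.le hv.2.le).deriv]
          have := h2b.monotoneOn (hmemIcoR t ht0 hts.le) (hmemv v hv.1.le hv.2.le) hv.1.le
          linarith
      have hmono := hm ⟨by linarith, hta⟩ ⟨hnt_ge, le_refl _⟩ hta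
      simp only at hmono
      have hexp : ψ' t * nψ t = ψ' t * t - ψ t := by
        rw [hnψ, mul_sub, mul_div_cancel₀ _ hψ't.ne]
      nlinarith [hmono, hexp]
    -- E4 : bound of ψ(nψ t) by the second derivative
    have hE4 : ψ (nψ t) ≤ ψ'' tstar / 2 * ψ 0 ^ 2 := by
      have hmemv : ∀ v : ℝ, t ≤ v → v ≤ nψ t → v ∈ Ico (0:ℝ) R :=
        fun v h1v h2v => ⟨le_trans ht0 h1v, by linarith [hnt_lt, htsR]⟩
      have hqd : ∀ v : ℝ, t ≤ v → v ≤ nψ t →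
          HasDerivAt (fun v : ℝ => ψ'' tstar / 2 * (v - t)^2 - (ψ v - ψ t - ψ' t * (v - t)))
            (ψ'' tstar * (v - t) - (ψ' v - ψ' t)) v := by
        intro v h1v h2v
        have c1 : HasDerivAt (fun v : ℝ => ψ'' tstar / 2 * (v - t)^2)
            (ψ'' tstar / 2 * (2 * (v - t))) v := by
          have := ((hasDerivAt_id v).sub_const t).pow 2
          have h2 := HasDerivAt.const_mul (ψ'' tstar / 2) this
          simpa using h2
        have c2 : HasDerivAt (fun v : ℝ => ψ v - ψ t - ψ' t * (v - t)) (ψ' v - ψ' t) v := by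
          have := ((hψ1 v (hmemv v h1v h2v)).sub_const (ψ t)).sub
            (HasDerivAt.const_mul (ψ' t) ((hasDerivAt_id v).sub_const t))
          exact (by simpa using this : HasDerivAt ((fun x => ψ x - ψ t) - fun y => ψ' t * (y - t)) (ψ' v - ψ' t) v)
        have hres := c1.sub c2
        have heq : ψ'' tstar * (v - t) - (ψ' v - ψ' t)
            = ψ'' tstar / 2 * (2 * (v - t)) - (ψ' v - ψ' t) := by ring
        rw [heq]
        exact hres
      have hm : MonotoneOn
          (fun v : ℝ => ψ'' tstar / 2 * (v - t)^2 - (ψ v - ψ t - ψ' t * (v - t)))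
          (Icc t (nψ t)) := by
        apply monotoneOn_of_deriv_nonneg (convex_Icc _ _)
        · intro v hv; exact (hqd v hv.1 hv.2).continuousAt.continuousWithinAt
        · intro v hv; rw [interior_Icc] at hv
          exact (hqd v hv.1.le hv.2.le).differentiableAt.differentiableWithinAt
        · intro v hv; rw [interior_Icc] at hv
          rw [(hqd v hv.1.le hv.2.le).deriv]
          have hmv := hmemv v hv.1.le hv.2.le
          have hsl := h2a.slope_le_of_hasDerivAt (hmemIcoR t ht0 hts.le) hmv hv.1 (hψ2 v hmv)
          rw [slope_def_field] at hsl
          have hvt : 0 < v - t := by linarith [hv.1]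
          rw [div_le_iff₀ hvt] at hsl
          have hv'' : ψ'' v ≤ ψ'' tstar :=
            hψ''mono v (le_trans ht0 hv.1.le) (by linarith [hnt_lt, hv.2])
          nlinarith [hsl, hv'', hvt]
      have hmono := hm ⟨le_refl t, hnt_ge⟩ ⟨hnt_ge, le_refl _⟩ hnt_ge
      simp only [sub_self, ne_eq, OfNat.ofNat_ne_zero, not_false_eq_true, zero_pow,
        mul_zero, sub_zero] at hmono
      have hexp : ψ' t * (nψ t - t) = -ψ t := by
        rw [hnψ]
        have : t - ψ t / ψ' t - t = -(ψ t / ψ' t) := by ring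
        rw [this, mul_neg, mul_div_cancel₀ _ hψ't.ne]
      have hpt_le : -(ψ t / ψ' t) ≤ ψ 0 := hrat t ht0 hts
      have hnts : nψ t - t = -(ψ t / ψ' t) := by rw [hnψ]; ring
      have hsq : (nψ t - t)^2 ≤ ψ 0 ^ 2 := by
        rw [hnts]
        nlinarith [hptp, hpt_le]
      have hsq2 : ψ'' tstar / 2 * (nψ t - t)^2 ≤ ψ'' tstar / 2 * ψ 0 ^ 2 := by
        apply mul_le_mul_of_nonneg_left hsq
        positivity
      nlinarith [hmono, hexp, hsq2]
    -- z is in the ball of radius r0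
    have hzr0 : ‖z‖ < r0 := by
      have hchain : lam * ‖z‖ ≤ ψ'' tstar / 2 * ψ 0 ^ 2 :=
        le_trans hE1 (le_trans hE2 (le_trans hE3 hE4))
      have heq : ψ'' tstar / 2 * ψ 0 ^ 2 = lam * (ψ'' tstar / (2*lam) * ψ 0 ^ 2) := by
        field_simp
      rw [heq] at hchain
      have hlt := lt_of_le_of_lt hchain (mul_lt_mul_of_pos_left hA4b hlam)
      exact lt_of_mul_lt_mul_left hlt hlam.le
    have hzball : z ∈ ball (0:Y) r0 := by
      rw [mem_ball, dist_eq_norm, sub_zero]; exact hzr0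
    obtain ⟨hxp_reg, hxp_sing, hxp_lip⟩ := hA1 xp hxprx0
    -- xp is the fixed point of the auxiliary problem at z
    have hfix : xp = s xp z := by
      have hsingz := hxp_sing z hzball
      have hmem : xp ∈ {y : X | z - (f xp + f' xp (y - xp)) ∈ F y} ∩ ball x₁ rx1 := by
        refine ⟨?_, hxp1⟩
        show z - (f xp + f' xp (xp - xp)) ∈ F xp
        have heq : z - (f xp + f' xp (xp - xp)) = 0 - (f x + f' x (xp - x)) := by
          rw [hzdef, hddef]
          simp only [sub_self, map_zero, add_zero, zero_sub]
          abel
        rw [heq, ← hddef]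
        exact hxpF
      rw [hsingz] at hmem
      simpa using hmem
    -- the denominator bound
    have hβmem : ‖xp - x₀‖ ∈ Ico (0:ℝ) R := ⟨norm_nonneg _, lt_trans hxpts htsR⟩
    have hx₀κ : x₀ ∈ ball x₀ κ := mem_ball_self (lt_of_lt_of_le htspos hκts)
    have hmaj0 := hmaj x₀ hx₀κ xp hxpκ
      (by rw [sub_self, norm_zero, add_zero]; exact hβmem.2)
    rw [sub_self, norm_zero, add_zero, h1'] at hmaj0
    have hmono' : ψ' ‖xp - x₀‖ ≤ ψ' (nψ t) :=
      h2b.monotoneOn hβmem (hmemIcoR (nψ t) hnt0 hnt_lt.le) hxpd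
    have hψ'n : ψ' (nψ t) < 0 := hψ'neg (nψ t) hnt0 hnt_lt
    have hden : -ψ' (nψ t) ≤ 1 - lam * ‖f' xp - f' x₀‖ := by linarith
    have hlip := hxp_lip 0 h0ball z hzball
    rw [zero_sub, norm_neg] at hlip
    have hd0 : (0:ℝ) < -ψ' (nψ t) := by linarith
    have hfinal : ‖s xp 0 - xp‖ ≤ -(ψ (nψ t) / ψ' (nψ t)) := by
      have hc1 : lam / (1 - lam * ‖f' xp - f' x₀‖) ≤ lam / (-ψ' (nψ t)) := by
        gcongr
      have h1z : ‖s xp 0 - s xp z‖ ≤ lam / (-ψ' (nψ t)) * ‖z‖ :=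
        le_trans hlip (mul_le_mul_of_nonneg_right hc1 (norm_nonneg _))
      rw [← hfix] at h1z
      have hlz : lam * ‖z‖ ≤ ψ (nψ t) := le_trans hE1 (le_trans hE2 hE3)
      have hrw : lam / (-ψ' (nψ t)) * ‖z‖ = lam * ‖z‖ / (-ψ' (nψ t)) := by ring
      rw [hrw] at h1z
      refine le_trans h1z ?_
      have hrhs : -(ψ (nψ t) / ψ' (nψ t)) = ψ (nψ t) / (-ψ' (nψ t)) := by
        rw [div_neg]
      rw [hrhs]
      gcongr
    rw [hK (nψ t)]
    exact ⟨hxpΩ, hxpd, hfinal⟩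
  have hsub : ∀ t ∈ Ico (0:ℝ) tstar, K t ⊆ ball x₀ tstar := by
    intro t ht x hx
    rw [hK t] at hx
    rw [mem_ball, dist_eq_norm]
    exact lt_of_le_of_lt hx.2.1 ht.2
  refine ⟨fun t ht => ⟨hsub t ht, fun x hx => hmain t ht x hx⟩, ?_, ?_⟩
  · intro x hx
    simp only [mem_iUnion] at hx
    obtain ⟨t, ht, hxt⟩ := hx
    exact hsub t ht hxt
  · intro x hx
    simp only [mem_iUnion] at hx ⊢
    obtain ⟨t, ht, hxt⟩ := hx
    exact ⟨nψ t, ⟨le_trans ht.1 (hnge t ht.1 ht.2), hnlt t ht.1 ht.2⟩, hmain t ht x hxt⟩
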